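/- Let (V,+) be a nontrivial abelian group containing an element v with 2v ≠ 0, and let G be a group of automorphisms of V acting fixed-point-freely. Then G contains at most one element of order 2. -/

import Mathlib

/-- If `V` is an abelian group containing an element `v` with `v + v ≠ 0` and `G`
is a group of automorphisms of `V` acting fixed-point-freely, then `G` contains
at most one element of order 2. -/
theorem stmt3 {V : Type*} [AddCommGroup V] (hv : ∃ v : V, v + v ≠ 0)
    (G : AddSubgroup (AddAut V))
    (hfpf : ∀ g ∈ G, ∀ h ∈ G, ∀ v : V, v ≠ 0 → g v = h v → g = h) :
    ∀ x ∈ G, ∀ y ∈ G, x ≠ 0 → 2 • x = 0 → y ≠ 0 → 2 • y = 0 → x = y := by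
  have key : ∀ x ∈ G, x ≠ 0 → 2 • x = 0 → ∀ v : V, x v = -v := by
    intro x hx hx1 hx2 v
    have hxx : ∀ w : V, x (x w) = w := by
      intro w
      have := congrArg (fun (g : AddAut V) => g w) hx2
      simpa [two_nsmul] using this
    by_contra h
    have hw : x v + v ≠ 0 := fun h0 => h (by linear_combination (norm := abel) h0)
    have hfix : x (x v + v) = (0 : AddAut V) (x v + v) := by
      simp [map_add, hxx, add_comm]
    exact hx1 (hfpf x hx 0 G.zero_mem _ hw hfix)
  intro x hx y hy hx1 hx2 hy1 hy2
  obtain ⟨v, hv2⟩ := hv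
  have hv0 : v ≠ 0 := fun h => hv2 (by simp [h])
  exact hfpf x hx y hy v hv0 (by rw [key x hx hx1 hx2 v, key y hy hy1 hy2 v])
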